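/- For a tagged pentatope with affinely independent vertices in ℝ⁴, the hyperface shared by its two bisection children is conv(x', x₁, x₂, x₃), where x' = (x₀+x₄)/2; this set equals conv(x₀,…,x₄) ∩ H where H is the affine hyperplane through x', x₁, x₂, x₃. -/

import Mathlib

/-- A tagged pentatope: an ordered 5-tuple of vertices together with a type γ ∈ {0,1,2,3}. -/
structure TP (V : Type*) where
  v : Fin 5 → V
  γ : Fin 4

/-- The vertex permutation used in Stevenson's reflection, depending on the type. -/
def refPerm (γ : Fin 4) : Fin 5 → Fin 5 :=
  if γ = 0 then ![4, 3, 2, 1, 0]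
  else if γ = 1 then ![4, 1, 3, 2, 0]
  else ![4, 1, 2, 3, 0]

/-- The reflection of a tagged pentatope. -/
def TP.reflect {V : Type*} (t : TP V) : TP V := ⟨t.v ∘ refPerm t.γ, t.γ⟩

variable {V : Type*} [AddCommGroup V] [Module ℝ V]

/-- The midpoint x' = (x₀ + x₄)/2 of the refinement edge. -/
noncomputable def TP.mid (t : TP V) : V := midpoint ℝ (t.v 0) (t.v 4)

/-- First child of the bisection rule. -/
noncomputable def TP.child1 (t : TP V) : TP V :=
  ⟨![t.v 0, t.mid, t.v 1, t.v 2, t.v 3], t.γ + 1⟩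

/-- Second child of the bisection rule. -/
noncomputable def TP.child2 (t : TP V) : TP V :=
  ⟨if t.γ = 0 then ![t.v 4, t.mid, t.v 3, t.v 2, t.v 1]
    else if t.γ = 1 then ![t.v 4, t.mid, t.v 1, t.v 3, t.v 2]
    else ![t.v 4, t.mid, t.v 1, t.v 2, t.v 3], t.γ + 1⟩

open Finset in
lemma mem_hull_iff {E : Type*} [AddCommGroup E] [Module ℝ E] {n : ℕ} (v : Fin n → E) (p : E) :
    p ∈ convexHull ℝ (Set.range v) ↔
      ∃ w : Fin n → ℝ, (∀ i, 0 ≤ w i) ∧ ∑ i, w i = 1 ∧ ∑ i, w i • v i = p := by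
  classical
  rw [convexHull_range_eq_exists_affineCombination]
  constructor
  · rintro ⟨s, w, h0, h1, rfl⟩
    have hsum : ∑ i, (s : Set (Fin n)).indicator w i = 1 := by
      simp only [Set.indicator_apply, Finset.mem_coe]
      rw [Fintype.sum_extend_by_zero s w]; exact h1
    refine ⟨(s : Set (Fin n)).indicator w, ?_, hsum, ?_⟩
    · intro i
      by_cases hi : i ∈ s <;> simp [Set.indicator_apply, hi, h0 i]
    · rw [← Finset.affineCombination_eq_linear_combination _ _ _ hsum]
      exact (Finset.affineCombination_indicator_subset w v s.subset_univ).symm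
  · rintro ⟨w, h0, h1, rfl⟩
    exact ⟨Finset.univ, w, fun i _ => h0 i, h1,
      Finset.affineCombination_eq_linear_combination _ _ _ h1⟩

lemma mem_span_iff {E : Type*} [AddCommGroup E] [Module ℝ E] {n : ℕ} (v : Fin n → E) (p : E) :
    p ∈ affineSpan ℝ (Set.range v) ↔
      ∃ w : Fin n → ℝ, ∑ i, w i = 1 ∧ ∑ i, w i • v i = p := by
  constructor
  · intro hp
    obtain ⟨w, hw, rfl⟩ := eq_affineCombination_of_mem_affineSpan_of_fintype hp
    exact ⟨w, hw, (Finset.affineCombination_eq_linear_combination _ _ _ hw).symm⟩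
  · rintro ⟨w, hw, rfl⟩
    rw [← Finset.affineCombination_eq_linear_combination _ _ _ hw]
    exact affineCombination_mem_affineSpan hw v

/-- For a tagged pentatope with affinely independent vertices in ℝ⁴, the
hyperface shared by its two bisection children is conv(x', x₁, x₂, x₃) with
x' = (x₀+x₄)/2, and this set equals the intersection of the original pentatope with the
affine hyperplane H spanned by x', x₁, x₂, x₃. -/
theorem bisection_children_shared_hyperface (t : TP (Fin 4 → ℝ))
    (h : AffineIndependent ℝ t.v) :
    convexHull ℝ (Set.range t.child1.v) ∩ convexHull ℝ (Set.range t.child2.v) =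
      convexHull ℝ ({t.mid, t.v 1, t.v 2, t.v 3} : Set (Fin 4 → ℝ)) ∧
    convexHull ℝ ({t.mid, t.v 1, t.v 2, t.v 3} : Set (Fin 4 → ℝ)) =
      convexHull ℝ (Set.range t.v) ∩
        (affineSpan ℝ ({t.mid, t.v 1, t.v 2, t.v 3} : Set (Fin 4 → ℝ)) :
          Set (Fin 4 → ℝ)) := by
  classical
  have hm : t.mid = (2⁻¹ : ℝ) • t.v 0 + (2⁻¹ : ℝ) • t.v 4 := by
    show midpoint ℝ (t.v 0) (t.v 4) = _
    rw [midpoint_eq_smul_add, smul_add, invOf_eq_inv]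
  let y : Fin 4 → (Fin 4 → ℝ) := ![t.mid, t.v 1, t.v 2, t.v 3]
  have hyr : ({t.mid, t.v 1, t.v 2, t.v 3} : Set (Fin 4 → ℝ)) = Set.range y := by
    ext p; simp [y]; try tauto
  let s1 : Fin 5 → (Fin 4 → ℝ) := ![t.v 0, t.mid, t.v 1, t.v 2, t.v 3]
  have hc1 : t.child1.v = s1 := rfl
  let s2 : Fin 5 → (Fin 4 → ℝ) := ![t.v 4, t.mid, t.v 1, t.v 2, t.v 3]
  have hr2 : Set.range t.child2.v = Set.range s2 := by
    show Set.range (if t.γ = 0 then _ else if t.γ = 1 then _ else _) = _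
    split_ifs <;> · ext p; simp [s2, TP.child2]; try tauto
  -- uniqueness of barycentric coordinates
  have huniq : ∀ w1 w2 : Fin 5 → ℝ, ∑ i, w1 i = 1 → ∑ i, w2 i = 1 →
      ∑ i, w1 i • t.v i = ∑ i, w2 i • t.v i → w1 = w2 := by
    intro w1 w2 h1 h2 heq
    refine (affineIndependent_iff_eq_of_fintype_affineCombination_eq ℝ t.v).mp h w1 w2 h1 h2 ?_
    rw [Finset.affineCombination_eq_linear_combination _ _ _ h1,
      Finset.affineCombination_eq_linear_combination _ _ _ h2]
    exact heq
  rw [hyr]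
  constructor
  · ext p
    simp only [Set.mem_inter_iff]
    constructor
    · rintro ⟨h1, h2⟩
      rw [hc1, mem_hull_iff] at h1
      rw [hr2, mem_hull_iff] at h2
      obtain ⟨u, hu0, hu1, hup⟩ := h1
      obtain ⟨w, hw0, hw1, hwp⟩ := h2
      have hU : (![u 0 + u 1 / 2, u 2, u 3, u 4, u 1 / 2] : Fin 5 → ℝ) =
          ![w 1 / 2, w 2, w 3, w 4, w 0 + w 1 / 2] := by
        rw [Fin.sum_univ_five] at hu1 hw1
        apply huniq
        · simp [Fin.sum_univ_five]; linarith
        · simp [Fin.sum_univ_five]; linarith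
        · rw [Fin.sum_univ_five] at hup hwp ⊢
          rw [Fin.sum_univ_five]
          simp only [s1, s2, Matrix.cons_val_zero, Matrix.cons_val_one, Matrix.head_cons,
            Matrix.cons_val_two, Matrix.tail_cons, Matrix.cons_val_three,
            Matrix.cons_val_four, hm] at hup hwp ⊢
          rw [← hwp] at hup
          linear_combination (norm := module) hup
      have e0 := congrFun hU 0
      have e4 := congrFun hU 4
      simp only [Matrix.cons_val_zero, Matrix.cons_val_four, Matrix.cons_val_one,
        Matrix.head_cons, Matrix.cons_val_two, Matrix.tail_cons, Matrix.cons_val_three] at e0 e4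
      have hu00 : u 0 = 0 := by have := hu0 0; have := hw0 0; linarith
      rw [Fin.sum_univ_five] at hu1 hup
      rw [mem_hull_iff]
      refine ⟨![u 1, u 2, u 3, u 4], ?_, ?_, ?_⟩
      · intro i; fin_cases i
        · simpa using hu0 1
        · simpa using hu0 2
        · simpa using hu0 3
        · simpa using hu0 4
      · rw [Fin.sum_univ_four]; simp; linarith
      · rw [Fin.sum_univ_four]
        simp only [y, s1, Matrix.cons_val_zero, Matrix.cons_val_one, Matrix.head_cons,
          Matrix.cons_val_two, Matrix.tail_cons, Matrix.cons_val_three,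
          Matrix.cons_val_four] at hup ⊢
        rw [← hup, hu00]
        module
    · intro hp
      constructor
      · refine convexHull_mono ?_ hp
        rw [hc1]
        intro q hq
        rcases hq with ⟨i, rfl⟩
        fin_cases i
        · exact ⟨1, rfl⟩
        · exact ⟨2, rfl⟩
        · exact ⟨3, rfl⟩
        · exact ⟨4, rfl⟩
      · rw [hr2]
        refine convexHull_mono ?_ hp
        intro q hq
        rcases hq with ⟨i, rfl⟩
        fin_cases i
        · exact ⟨1, rfl⟩
        · exact ⟨2, rfl⟩
        · exact ⟨3, rfl⟩
        · exact ⟨4, rfl⟩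
  · ext p
    simp only [Set.mem_inter_iff, SetLike.mem_coe]
    constructor
    · intro hp
      refine ⟨?_, convexHull_subset_affineSpan _ hp⟩
      refine convexHull_min ?_ (convex_convexHull ℝ _) hp
      rw [← hyr]
      rintro q hq
      simp only [Set.mem_insert_iff, Set.mem_singleton_iff] at hq
      rcases hq with rfl | rfl | rfl | rfl
      · rw [mem_hull_iff]
        refine ⟨![2⁻¹, 0, 0, 0, 2⁻¹], ?_, ?_, ?_⟩
        · intro i; fin_cases i <;> norm_num
        · rw [Fin.sum_univ_five]; norm_num
          show (1 / 2 : ℝ) + 0 + 0 + 1 / 2 = 1; norm_num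
        · simp only [Fin.sum_univ_five, Matrix.cons_val_zero, Matrix.cons_val_one,
            Matrix.head_cons, Matrix.cons_val_two, Matrix.tail_cons, Matrix.cons_val_three,
            Matrix.cons_val_four, hm]
          module
      · exact subset_convexHull ℝ _ ⟨1, rfl⟩
      · exact subset_convexHull ℝ _ ⟨2, rfl⟩
      · exact subset_convexHull ℝ _ ⟨3, rfl⟩
    · rintro ⟨hc, hs⟩
      rw [mem_hull_iff] at hc
      obtain ⟨c, hc0, hc1, hcp⟩ := hc
      rw [mem_span_iff] at hs
      obtain ⟨a, ha1, hap⟩ := hs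
      have hA : c = ![a 0 / 2, a 1, a 2, a 3, a 0 / 2] := by
        rw [Fin.sum_univ_four] at ha1
        apply huniq _ _ hc1
        · rw [Fin.sum_univ_five]
          simp only [Matrix.cons_val_zero, Matrix.cons_val_one, Matrix.head_cons,
            Matrix.cons_val_two, Matrix.tail_cons, Matrix.cons_val_three, Matrix.cons_val_four]
          linarith
        · simp only [Fin.sum_univ_five, Fin.sum_univ_four, y, Matrix.cons_val_zero,
            Matrix.cons_val_one, Matrix.head_cons, Matrix.cons_val_two, Matrix.tail_cons,
            Matrix.cons_val_three, Matrix.cons_val_four, hm] at hcp hap ⊢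
          rw [hcp, ← hap]
          module
      rw [mem_hull_iff]
      refine ⟨a, ?_, ha1, hap⟩
      have e0 := congrFun hA 0
      have e1 := congrFun hA 1
      have e2 := congrFun hA 2
      have e3 := congrFun hA 3
      simp only [Matrix.cons_val_zero, Matrix.cons_val_one, Matrix.head_cons,
        Matrix.cons_val_two, Matrix.tail_cons, Matrix.cons_val_three] at e0 e1 e2 e3
      intro i; fin_cases i
      · have := hc0 0; rw [e0] at this; simpa using by linarith
      · have := hc0 1; rw [e1] at this; simpa using this
      · have := hc0 2; rw [e2] at this; simpa using this
      · have := hc0 3; rw [e3] at this; simpa using this
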